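/- (Discrete Green's identity for the potential term) Suppose ψ_j(t) and c_j(t) satisfy the discrete Poisson equation ψ_{j+1} − 2ψ_j + ψ_{j−1} = −h² c_j for j = 1,…,N at every time, with boundary conditions ψ_0 = ψ_1 + hσ_a and ψ_{N+1} = ψ_N + hσ_b where σ_a, σ_b are time-independent constants. Then (h/2)∑_{j=1}^N (c_j ψ_j' − c_j' ψ_j) = −(σ_a ψ_1' + σ_b ψ_N')/2. -/

import Mathlib

/-- Discrete Green's identity for the potential term. -/
theorem discrete_green_identity
    (N : ℕ) (hN : 1 ≤ N) (h : ℝ) (hh : 0 < h)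
    (σa σb : ℝ) (ψ c : ℕ → ℝ → ℝ)
    (hψdiff : ∀ j, Differentiable ℝ (ψ j))
    (hcdiff : ∀ j, Differentiable ℝ (c j))
    (hpoisson : ∀ t : ℝ, ∀ j ∈ Finset.Icc 1 N,
      ψ (j + 1) t - 2 * ψ j t + ψ (j - 1) t = -h ^ 2 * c j t)
    (hbca : ∀ t : ℝ, ψ 0 t = ψ 1 t + h * σa)
    (hbcb : ∀ t : ℝ, ψ (N + 1) t = ψ N t + h * σb) :
    ∀ t : ℝ,
      (h / 2) * ∑ j ∈ Finset.Icc 1 N,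
          (c j t * deriv (ψ j) t - deriv (c j) t * ψ j t)
        = -(σa * deriv (ψ 1) t + σb * deriv (ψ N) t) / 2 := by
  intro t
  have hh2 : (h : ℝ) ^ 2 ≠ 0 := by positivity
  -- Wronskian-type quantity
  set W : ℕ → ℝ := fun j => ψ (j + 1) t * deriv (ψ j) t - deriv (ψ (j + 1)) t * ψ j t
    with hW
  -- derivative of c
  have hderivc : ∀ j ∈ Finset.Icc 1 N, deriv (c j) t =
      -(1 / h ^ 2) * (deriv (ψ (j + 1)) t - 2 * deriv (ψ j) t + deriv (ψ (j - 1)) t) := by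
    intro j hj
    have hc : c j = fun s => -(1 / h ^ 2) *
        (ψ (j + 1) s - 2 * ψ j s + ψ (j - 1) s) := by
      funext s
      have := hpoisson s j hj
      field_simp
      linarith
    have H : HasDerivAt (fun s => -(1 / h ^ 2) *
        (ψ (j + 1) s - 2 * ψ j s + ψ (j - 1) s))
        (-(1 / h ^ 2) * (deriv (ψ (j + 1)) t - 2 * deriv (ψ j) t + deriv (ψ (j - 1)) t)) t := by
      exact ((((hψdiff (j + 1) t).hasDerivAt.sub
        ((hψdiff j t).hasDerivAt.const_mul 2)).add
        (hψdiff (j - 1) t).hasDerivAt).const_mul (-(1 / h ^ 2)))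
    rw [hc]
    exact H.deriv
  -- values of c
  have hcval : ∀ j ∈ Finset.Icc 1 N, c j t =
      -(1 / h ^ 2) * (ψ (j + 1) t - 2 * ψ j t + ψ (j - 1) t) := by
    intro j hj
    have := hpoisson t j hj
    field_simp
    linarith
  -- boundary derivatives
  have hd0 : deriv (ψ 0) t = deriv (ψ 1) t := by
    have : ψ 0 = fun s => ψ 1 s + h * σa := funext hbca
    rw [this, deriv_add_const]
  have hdN : deriv (ψ (N + 1)) t = deriv (ψ N) t := by
    have : ψ (N + 1) = fun s => ψ N s + h * σb := funext hbcb
    rw [this, deriv_add_const]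
  -- rewrite each summand as a telescoping difference
  have hsum : ∀ j ∈ Finset.Icc 1 N,
      c j t * deriv (ψ j) t - deriv (c j) t * ψ j t
        = -(1 / h ^ 2) * (W j - W (j - 1)) := by
    intro j hj
    have hj1 : 1 ≤ j := (Finset.mem_Icc.mp hj).1
    have hj2 : j - 1 + 1 = j := Nat.succ_pred_eq_of_pos hj1
    rw [hcval j hj, hderivc j hj, hW]
    simp only [hj2]
    ring
  rw [Finset.sum_congr rfl hsum, ← Finset.mul_sum]
  have htel : ∑ j ∈ Finset.Icc 1 N, (W j - W (j - 1)) = W N - W 0 := by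
    rw [← Finset.Ico_add_one_right_eq_Icc, Finset.sum_Ico_eq_sum_range]
    have : ∀ j ∈ Finset.range (N + 1 - 1), W (1 + j) - W (1 + j - 1) = W (j + 1) - W j := by
      intro j _
      congr 1 <;> congr 1 <;> omega
    rw [Finset.sum_congr rfl this, Finset.sum_range_sub, Nat.add_sub_cancel]
  rw [htel]
  have hWN : W N = h * σb * deriv (ψ N) t := by
    rw [hW]; simp only [hbcb t, hdN]; ring
  have hW0 : W 0 = -(h * σa * deriv (ψ 1) t) := by
    rw [hW]; simp only [hbca t, hd0]; ring
  rw [hWN, hW0]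
  field_simp
  ring
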